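/- Let n ≥ 1, let A, B ∈ ℙ_n, and let s, t, u ∈ ℝ. Then (A ♮_s B) ♮_t (A ♮_u B) = A ♮_{(1-t)s + t u} B. -/

import Mathlib

open Matrix
open scoped ComplexOrder

/-- Real power `A^t = exp(t · log A)` of a Hermitian positive definite matrix, defined via
the functional calculus (spectral decomposition). -/
noncomputable def mpow {n : ℕ} (A : Matrix (Fin n) (Fin n) ℂ) (t : ℝ) :
    Matrix (Fin n) (Fin n) ℂ :=
  if hA : A.IsHermitian then
    (hA.eigenvectorUnitary : Matrix (Fin n) (Fin n) ℂ) *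
      Matrix.diagonal (fun i => ((hA.eigenvalues i ^ t : ℝ) : ℂ)) *
      (star (hA.eigenvectorUnitary : Matrix (Fin n) (Fin n) ℂ))
  else A

/-- Logarithm of a Hermitian positive definite matrix via the functional calculus. -/
noncomputable def mlog {n : ℕ} (A : Matrix (Fin n) (Fin n) ℂ) : Matrix (Fin n) (Fin n) ℂ :=
  if hA : A.IsHermitian then
    (hA.eigenvectorUnitary : Matrix (Fin n) (Fin n) ℂ) *
      Matrix.diagonal (fun i => ((Real.log (hA.eigenvalues i) : ℝ) : ℂ)) *
      (star (hA.eigenvectorUnitary : Matrix (Fin n) (Fin n) ℂ))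
  else A

/-- Metric geometric mean `A # B = A^{1/2} (A^{-1/2} B A^{-1/2})^{1/2} A^{1/2}`. -/
noncomputable def geomMean {n : ℕ} (A B : Matrix (Fin n) (Fin n) ℂ) :
    Matrix (Fin n) (Fin n) ℂ :=
  mpow A (1/2) * mpow (mpow A (-(1/2)) * B * mpow A (-(1/2))) (1/2) * mpow A (1/2)

/-- Weighted spectral geometric mean `A ♮_t B = (A⁻¹ # B)^t A (A⁻¹ # B)^t`. -/
noncomputable def spectralMean {n : ℕ} (t : ℝ) (A B : Matrix (Fin n) (Fin n) ℂ) :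
    Matrix (Fin n) (Fin n) ℂ :=
  mpow (geomMean A⁻¹ B) t * A * mpow (geomMean A⁻¹ B) t

variable {n : ℕ}

lemma spectrum_subset_pos {A : Matrix (Fin n) (Fin n) ℂ} (hA : A.PosDef) :
    spectrum ℝ A ⊆ {x : ℝ | 0 < x} := by
  intro x hx
  rw [hA.1.spectrum_real_eq_range_eigenvalues] at hx
  obtain ⟨i, rfl⟩ := hx
  exact hA.eigenvalues_pos i

lemma contOn_rpow (t : ℝ) : ContinuousOn (fun x : ℝ => x ^ t) {x : ℝ | 0 < x} :=
  fun x hx => (Real.continuousAt_rpow_const x t (Or.inl (ne_of_gt hx))).continuousWithinAt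

lemma mpow_eq_cfc {A : Matrix (Fin n) (Fin n) ℂ} (hA : A.IsHermitian) (t : ℝ) :
    mpow A t = cfc (fun x : ℝ => x ^ t) A := by
  rw [mpow, dif_pos hA, hA.cfc_eq]
  rfl

lemma contOn_rpow_spec {A : Matrix (Fin n) (Fin n) ℂ} (hA : A.PosDef) (t : ℝ) :
    ContinuousOn (fun x : ℝ => x ^ t) (spectrum ℝ A) :=
  (contOn_rpow t).mono (spectrum_subset_pos hA)

lemma posDef_conj {B C : Matrix (Fin n) (Fin n) ℂ} (hB : B.PosDef) (hC : IsUnit C) :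
    (Cᴴ * B * C).PosDef := by
  refine PosDef.of_dotProduct_mulVec_pos (Matrix.isHermitian_conjTranspose_mul_mul C hB.1) fun x hx => ?_
  have h1 : C *ᵥ x ≠ 0 := by
    intro h
    apply hx
    have hinj := Matrix.mulVec_injective_iff_isUnit.mpr hC
    exact hinj (by simpa using h)
  simpa only [star_mulVec, dotProduct_mulVec, vecMul_vecMul] using hB.dotProduct_mulVec_pos h1

lemma mpow_posDef {A : Matrix (Fin n) (Fin n) ℂ} (hA : A.PosDef) (t : ℝ) :
    (mpow A t).PosDef := by
  rw [mpow, dif_pos hA.1]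
  set U := (hA.1.eigenvectorUnitary : Matrix (Fin n) (Fin n) ℂ) with hU
  have hd : (Matrix.diagonal (fun i => ((hA.1.eigenvalues i ^ t : ℝ) : ℂ))).PosDef := by
    refine Matrix.PosDef.diagonal fun i => ?_
    rw [Complex.zero_lt_real]
    exact Real.rpow_pos_of_pos (hA.eigenvalues_pos i) t
  have hCU : IsUnit (star U) :=
    ⟨⟨star U, U, Unitary.star_mul_self_of_mem (SetLike.coe_mem _),
      Unitary.mul_star_self_of_mem (SetLike.coe_mem _)⟩, rfl⟩
  have := posDef_conj hd hCU
  rwa [show (star U)ᴴ = U from by simp [Matrix.star_eq_conjTranspose]] at this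

lemma mpow_mul_mpow {A : Matrix (Fin n) (Fin n) ℂ} (hA : A.PosDef) (s t : ℝ) :
    mpow A s * mpow A t = mpow A (s + t) := by
  rw [mpow_eq_cfc hA.1, mpow_eq_cfc hA.1, mpow_eq_cfc hA.1,
    ← cfc_mul _ _ A (contOn_rpow_spec hA s) (contOn_rpow_spec hA t)]
  exact cfc_congr fun x hx => (Real.rpow_add (spectrum_subset_pos hA hx) s t).symm

lemma mpow_mpow {A : Matrix (Fin n) (Fin n) ℂ} (hA : A.PosDef) (s t : ℝ) :
    mpow (mpow A s) t = mpow A (s * t) := by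
  have hsub : (fun x : ℝ => x ^ s) '' spectrum ℝ A ⊆ {x : ℝ | 0 < x} := by
    rintro - ⟨x, hx, rfl⟩
    exact Real.rpow_pos_of_pos (spectrum_subset_pos hA hx) s
  have h := cfc_comp (fun x : ℝ => x ^ t) (fun x : ℝ => x ^ s) A hA.1
    ((contOn_rpow t).mono hsub) (contOn_rpow_spec hA s)
  rw [mpow_eq_cfc (mpow_posDef hA s).1, mpow_eq_cfc hA.1, ← h, mpow_eq_cfc hA.1]
  exact cfc_congr fun x hx =>
    (Real.rpow_mul (le_of_lt (spectrum_subset_pos hA hx)) s t).symm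

lemma mpow_one {A : Matrix (Fin n) (Fin n) ℂ} (hA : A.PosDef) : mpow A 1 = A := by
  rw [mpow_eq_cfc hA.1]
  rw [show (fun x : ℝ => x ^ (1 : ℝ)) = id from funext fun x => Real.rpow_one x]
  exact cfc_id ℝ A hA.1

lemma mpow_zero {A : Matrix (Fin n) (Fin n) ℂ} (hA : A.PosDef) : mpow A 0 = 1 := by
  rw [mpow_eq_cfc hA.1]
  rw [show (fun x : ℝ => x ^ (0 : ℝ)) = (1 : ℝ → ℝ) from funext fun x => Real.rpow_zero x]
  exact cfc_one ℝ A hA.1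

lemma mpow_neg_one {A : Matrix (Fin n) (Fin n) ℂ} (hA : A.PosDef) : mpow A (-1) = A⁻¹ := by
  refine (Matrix.inv_eq_left_inv ?_).symm
  calc mpow A (-1) * A = mpow A (-1) * mpow A 1 := by rw [mpow_one hA]
    _ = mpow A 0 := by rw [mpow_mul_mpow hA]; norm_num
    _ = 1 := mpow_zero hA

lemma mpow_inv {A : Matrix (Fin n) (Fin n) ℂ} (hA : A.PosDef) (t : ℝ) :
    mpow A⁻¹ t = mpow A (-t) := by
  rw [← mpow_neg_one hA, mpow_mpow hA, neg_one_mul]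


lemma posDef_conj_herm {B C : Matrix (Fin n) (Fin n) ℂ} (hB : B.PosDef) (hC : C.PosDef) :
    (C * B * C).PosDef := by
  have := posDef_conj hB hC.isUnit
  rwa [hC.1.eq] at this

lemma mpow_sq {W : Matrix (Fin n) (Fin n) ℂ} (hW : W.PosDef) : mpow W 2 = W * W := by
  rw [show (2 : ℝ) = 1 + 1 by norm_num, ← mpow_mul_mpow hW, mpow_one hW]

/-- Riccati property: the unique positive definite solution `Z` of `Z P Z = Q` is `P⁻¹ # Q`. -/
lemma geomMean_inv_eq {P Z : Matrix (Fin n) (Fin n) ℂ} (hP : P.PosDef) (hZ : Z.PosDef) :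
    geomMean P⁻¹ (Z * P * Z) = Z := by
  have h12 := mpow_posDef hP (1/2 : ℝ)
  set R := mpow P (1/2) with hR
  set W := R * Z * R with hW
  have hWpd : W.PosDef := posDef_conj_herm hZ h12
  have hPP : R * R = P := by
    rw [hR, mpow_mul_mpow hP]; norm_num [mpow_one hP]
  have key : R * (Z * P * Z) * R = W * W := by
    rw [hW, ← hPP]
    simp only [mul_assoc]
  have hWW : mpow (W * W) (1/2) = W := by
    rw [← mpow_sq hWpd, mpow_mpow hWpd]
    norm_num [mpow_one hWpd]
  have hRR0 : mpow P (-(1/2)) * R = 1 := by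
    rw [hR, mpow_mul_mpow hP]; norm_num [mpow_zero hP]
  have hRR0' : R * mpow P (-(1/2)) = 1 := by
    rw [hR, mpow_mul_mpow hP]; norm_num [mpow_zero hP]
  rw [geomMean, mpow_inv hP, mpow_inv hP, neg_neg, key, hWW, hW]
  calc mpow P (-(1/2)) * (R * Z * R) * mpow P (-(1/2))
      = (mpow P (-(1/2)) * R) * Z * (R * mpow P (-(1/2))) := by simp only [mul_assoc]
    _ = Z := by rw [hRR0, hRR0', one_mul, mul_one]

lemma conj_conj {C : Matrix (Fin n) (Fin n) ℂ} (hC : C.PosDef)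
    (X : Matrix (Fin n) (Fin n) ℂ) (a b : ℝ) :
    mpow C a * (mpow C b * X * mpow C b) * mpow C a = mpow C (a + b) * X * mpow C (a + b) := by
  calc mpow C a * (mpow C b * X * mpow C b) * mpow C a
      = (mpow C a * mpow C b) * X * (mpow C b * mpow C a) := by simp only [mul_assoc]
    _ = mpow C (a + b) * X * mpow C (a + b) := by
        rw [mpow_mul_mpow hC a b, mpow_mul_mpow hC b a, add_comm b a]


theorem spectralMean_spectralMean {n : ℕ} (hn : 1 ≤ n) (A B : Matrix (Fin n) (Fin n) ℂ)
    (hA : A.PosDef) (hB : B.PosDef) (s t u : ℝ) :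
    spectralMean t (spectralMean s A B) (spectralMean u A B) =
      spectralMean ((1 - t) * s + t * u) A B := by
  set C := geomMean A⁻¹ B with hC
  have hCpd : C.PosDef := by
    rw [hC, geomMean]
    refine posDef_conj_herm ?_ (mpow_posDef hA.inv (1/2))
    refine mpow_posDef (posDef_conj_herm hB (mpow_posDef hA.inv (-(1/2)))) (1/2)
  have hF : ∀ v : ℝ, spectralMean v A B = mpow C v * A * mpow C v := fun v => rfl
  have hFs : (spectralMean s A B).PosDef := by
    rw [hF s]; exact posDef_conj_herm hA (mpow_posDef hCpd s)
  have key : geomMean (spectralMean s A B)⁻¹ (spectralMean u A B) = mpow C (u - s) := by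
    have hq : mpow C (u - s) * (spectralMean s A B) * mpow C (u - s) = spectralMean u A B := by
      rw [hF s, hF u, conj_conj hCpd, show u - s + s = u by ring]
    rw [← hq]
    exact geomMean_inv_eq hFs (mpow_posDef hCpd (u - s))
  show mpow (geomMean (spectralMean s A B)⁻¹ (spectralMean u A B)) t * (spectralMean s A B) *
      mpow (geomMean (spectralMean s A B)⁻¹ (spectralMean u A B)) t = _
  rw [key, mpow_mpow hCpd, hF s, conj_conj hCpd, hF, show (u - s) * t + s = (1 - t) * s + t * u by ring]
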